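/- Let Z be a commutative ring, let A be an Azumaya algebra over Z, and let R be a ring containing A as a subring such that Z is contained in the center of R. Then the multiplication map A ⊗_Z C_R(A) → R is an isomorphism, where C_R(A) = {r ∈ R : ra = ar for all a ∈ A} is the centralizer of A in R. -/

import Mathlib

open scoped TensorProduct

/-- The canonical map `A ⊗[Z] Aᵐᵒᵖ →ₐ[Z] End_Z(A)` sending `a ⊗ bᵒᵖ` to the map
`x ↦ a * x * b`. -/
noncomputable def mulLeftRightAlgHom (Z A : Type*) [CommRing Z] [Ring A] [Algebra Z A] :
    (A ⊗[Z] Aᵐᵒᵖ) →ₐ[Z] Module.End Z A :=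
  Algebra.TensorProduct.lift (Algebra.lmul Z A) (Algebra.lsmul Z Z A (A := Aᵐᵒᵖ))
    (fun a b => LinearMap.ext fun x => (mul_assoc a x b.unop).symm)

/-- An algebra `A` over a commutative ring `Z` is an Azumaya algebra if it is a
finitely generated projective faithful `Z`-module and the natural map
`A ⊗[Z] Aᵐᵒᵖ → End_Z(A)`, `a ⊗ bᵒᵖ ↦ (x ↦ a x b)`, is bijective. -/
def IsAzumayaAlgebra (Z A : Type*) [CommRing Z] [Ring A] [alg : Algebra Z A] : Prop :=
  Module.Finite Z A ∧ Module.Projective Z A ∧ FaithfulSMul Z A ∧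
    Function.Bijective (mulLeftRightAlgHom Z A)

set_option maxHeartbeats 1000000 in
/-- let `Z` be a commutative ring, `A` an Azumaya algebra over
`Z`, and `R` a ring containing `A` as a subring (via an injective `Z`-algebra
map `f : A → R`) with `Z` contained in the center of `R`.  Then the
multiplication map `A ⊗[Z] C_R(A) → R` is an isomorphism, where `C_R(A)` is
the centralizer of `A` in `R`. -/
theorem azumaya_tensor_centralizer_bijective
    (Z : Type*) [CommRing Z]
    (A : Type*) [Ring A] [Algebra Z A]
    (R : Type*) [Ring R] [Algebra Z R]
    (hAz : IsAzumayaAlgebra Z A)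
    (f : A →ₐ[Z] R) (hf : Function.Injective f) :
    Function.Bijective
      (Algebra.TensorProduct.lift f (Subalgebra.centralizer Z (Set.range f)).val
        (fun a c => (c.2 (f a) ⟨a, rfl⟩ : f a * (c : R) = (c : R) * f a))) := by
  obtain ⟨hfin, hproj, -, hbij⟩ := hAz
  haveI := hfin; haveI := hproj
  set g := Algebra.TensorProduct.lift f (Subalgebra.centralizer Z (Set.range f)).val
        (fun a c => (c.2 (f a) ⟨a, rfl⟩ : f a * (c : R) = (c : R) * f a)) with hgdef
  -- dual basis
  obtain ⟨n, π, hπ⟩ := Module.Finite.exists_fin' Z A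
  obtain ⟨s, hs⟩ := Module.projective_lifting_property π LinearMap.id hπ
  let xx : Fin n → A := fun i => π (Pi.single i 1)
  let φ : Fin n → Module.Dual Z A := fun i => (LinearMap.proj i).comp s
  have hdual : ∀ a : A, ∑ i, φ i a • xx i = a := by
    intro a
    have h1 : ∀ i : Fin n, φ i a • xx i = π (Pi.single i (s a i)) := by
      intro i
      rw [show φ i a • xx i = π ((s a i) • (Pi.single i 1 : Fin n → Z)) from
        (map_smul π _ _).symm]
      congr 1
      ext j
      simp [Pi.single_apply, mul_ite]
    simp_rw [h1]
    rw [← map_sum, Finset.univ_sum_single]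
    simpa using LinearMap.congr_fun hs a
  -- the equivalence
  let e : (A ⊗[Z] Aᵐᵒᵖ) ≃ₐ[Z] Module.End Z A :=
    AlgEquiv.ofBijective (mulLeftRightAlgHom Z A) hbij
  have he : ∀ t, e t = mulLeftRightAlgHom Z A t := fun _ => rfl
  have hem : ∀ (a : A) (b : Aᵐᵒᵖ) (x : A), e (a ⊗ₜ[Z] b) x = a * x * b.unop := by
    intro a b x
    rw [he]
    simp only [mulLeftRightAlgHom, Algebra.TensorProduct.lift_tmul]
    exact (mul_assoc a x b.unop).symm
  have hmlr : ∀ (a : A) (b : Aᵐᵒᵖ) (x : A),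
      mulLeftRightAlgHom Z A (a ⊗ₜ[Z] b) x = a * x * b.unop := by
    intro a b x
    simp only [mulLeftRightAlgHom, Algebra.TensorProduct.lift_tmul]
    exact (mul_assoc a x b.unop).symm
  -- the action of A ⊗ Aᵐᵒᵖ on R
  set ρ : (A ⊗[Z] Aᵐᵒᵖ) →ₐ[Z] Module.End Z R :=
    Algebra.TensorProduct.lift ((Algebra.lmul Z R).comp f)
      ((Algebra.lsmul Z Z R (A := Rᵐᵒᵖ)).comp (AlgHom.op f))
      (fun a b => LinearMap.ext fun x => (mul_assoc (f a) x (f b.unop)).symm) with hρdef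
  have hρ : ∀ (a : A) (b : Aᵐᵒᵖ) (r : R), ρ (a ⊗ₜ[Z] b) r = f a * r * f b.unop := by
    intro a b r
    simp only [hρdef, Algebra.TensorProduct.lift_tmul]
    exact (mul_assoc (f a) r (f b.unop)).symm
  -- dual functionals as elements of End
  let E : Module.Dual Z A → Module.End Z A := fun l => (Algebra.linearMap Z A).comp l
  have hE : ∀ (l : Module.Dual Z A) (x : A), E l x = algebraMap Z A (l x) := fun _ _ => rfl
  -- the swap property
  have hswap : ∀ (l : Module.Dual Z A) (a : A),
      (a ⊗ₜ[Z] (1 : Aᵐᵒᵖ)) * e.symm (E l)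
        = ((1 : A) ⊗ₜ[Z] MulOpposite.op a) * e.symm (E l) := by
    intro l a
    apply e.injective
    rw [map_mul, map_mul, AlgEquiv.apply_symm_apply]
    refine LinearMap.ext fun x => ?_
    simp only [Module.End.mul_apply, hem, hE, MulOpposite.unop_one, MulOpposite.unop_op,
      mul_one, one_mul]
    exact (Algebra.commutes (l x) a).symm
  have hcomm : ∀ (l : Module.Dual Z A) (r : R) (a : A),
      f a * (ρ (e.symm (E l)) r) = (ρ (e.symm (E l)) r) * f a := by
    intro l r a
    have h := congrArg (fun t => ρ t r) (hswap l a)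
    simpa only [map_mul, Module.End.mul_apply, hρ, MulOpposite.unop_one, MulOpposite.unop_op,
      map_one, mul_one, one_mul] using h
  -- action on central elements
  have hcent : ∀ (t : A ⊗[Z] Aᵐᵒᵖ) (c : R), (∀ a : A, f a * c = c * f a) →
      ρ t c = f (mulLeftRightAlgHom Z A t 1) * c := by
    intro t c hc
    induction t using TensorProduct.induction_on with
    | zero => simp
    | tmul a b =>
      rw [hρ, hmlr, mul_one, map_mul, mul_assoc, ← hc b.unop, ← mul_assoc]
    | add x y hx hy =>
      simp only [map_add, LinearMap.add_apply, hx, hy, add_mul]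
  -- the centralizer-valued maps
  let cl : Module.Dual Z A → R →ₗ[Z] (Subalgebra.centralizer Z (Set.range f)) := fun l =>
    { toFun := fun r => ⟨ρ (e.symm (E l)) r, by
        rw [Subalgebra.mem_centralizer_iff]
        rintro x ⟨a, rfl⟩
        exact hcomm l r a⟩
      map_add' := fun r r' => Subtype.ext (map_add _ r r')
      map_smul' := fun z r => Subtype.ext (map_smul _ z r) }
  have hcl : ∀ (l : Module.Dual Z A) (r : R), (cl l r : R) = ρ (e.symm (E l)) r :=
    fun _ _ => rfl
  -- the inverse map
  let μ : R →ₗ[Z] A ⊗[Z] (Subalgebra.centralizer Z (Set.range f)) :=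
    { toFun := fun r => ∑ i, xx i ⊗ₜ[Z] cl (φ i) r
      map_add' := by
        intro r r'
        rw [← Finset.sum_add_distrib]
        exact Finset.sum_congr rfl fun i _ => by rw [map_add, TensorProduct.tmul_add]
      map_smul' := by
        intro z r
        simp only [RingHom.id_apply]
        rw [Finset.smul_sum]
        exact Finset.sum_congr rfl fun i _ => by rw [map_smul, TensorProduct.tmul_smul] }
  have hμapp : ∀ r : R, μ r = ∑ i, xx i ⊗ₜ[Z] cl (φ i) r := fun _ => rfl
  have hgl : ∀ (a : A) (c : Subalgebra.centralizer Z (Set.range f)),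
      g (a ⊗ₜ[Z] c) = f a * (c : R) := by
    intro a c
    rw [hgdef]
    rfl
  -- g ∘ μ = id
  have hgμ : ∀ r : R, g (μ r) = r := by
    intro r
    rw [hμapp, map_sum]
    have step : ∀ i : Fin n, g (xx i ⊗ₜ[Z] cl (φ i) r)
        = ρ ((xx i ⊗ₜ[Z] (1 : Aᵐᵒᵖ)) * e.symm (E (φ i))) r := by
      intro i
      rw [hgl, hcl, map_mul, Module.End.mul_apply, hρ, MulOpposite.unop_one, map_one, mul_one]
    rw [Finset.sum_congr rfl fun i _ => step i]
    have h5 : (∑ i, (xx i ⊗ₜ[Z] (1 : Aᵐᵒᵖ)) * e.symm (E (φ i))) = 1 := by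
      apply e.injective
      rw [map_sum, map_one]
      refine LinearMap.ext fun a => ?_
      simp only [LinearMap.sum_apply, map_mul, AlgEquiv.apply_symm_apply, Module.End.mul_apply,
        Module.End.one_apply]
      simp only [hem, hE, MulOpposite.unop_one, mul_one]
      calc ∑ i, xx i * algebraMap Z A (φ i a)
          = ∑ i, φ i a • xx i := by
            refine Finset.sum_congr rfl fun i _ => ?_
            rw [← Algebra.commutes, ← Algebra.smul_def]
        _ = a := hdual a
    rw [← LinearMap.sum_apply, ← map_sum, h5, map_one, Module.End.one_apply]
  -- μ ∘ g = id on pure tensors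
  have hμgt : ∀ (a : A) (c : Subalgebra.centralizer Z (Set.range f)),
      μ (g (a ⊗ₜ[Z] c)) = a ⊗ₜ[Z] c := by
    intro a c
    have hc : ∀ a' : A, f a' * (c : R) = (c : R) * f a' :=
      fun a' => c.2 (f a') ⟨a', rfl⟩
    have key : ∀ l : Module.Dual Z A,
        ρ (e.symm (E l)) (f a * (c : R)) = l a • (c : R) := by
      intro l
      have h6 : ρ (a ⊗ₜ[Z] (1 : Aᵐᵒᵖ)) (c : R) = f a * (c : R) := by
        rw [hρ, MulOpposite.unop_one, map_one, mul_one]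
      rw [← h6, ← Module.End.mul_apply, ← map_mul, hcent _ _ hc]
      have h7 : mulLeftRightAlgHom Z A (e.symm (E l) * (a ⊗ₜ[Z] (1 : Aᵐᵒᵖ))) 1
          = algebraMap Z A (l a) := by
        rw [← he, map_mul, AlgEquiv.apply_symm_apply, Module.End.mul_apply, he, hmlr,
          MulOpposite.unop_one, mul_one, mul_one, hE]
      rw [h7, AlgHom.commutes, Algebra.smul_def]
    have hclkey : ∀ i : Fin n, cl (φ i) (f a * (c : R)) = φ i a • c := by
      intro i
      refine Subtype.ext ?_
      rw [hcl, key (φ i)]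
      rfl
    rw [hgl, hμapp]
    have h8 : ∀ i : Fin n, xx i ⊗ₜ[Z] cl (φ i) (f a * (c : R))
        = (φ i a • xx i) ⊗ₜ[Z] c := by
      intro i
      rw [hclkey i, TensorProduct.tmul_smul, TensorProduct.smul_tmul']
    rw [Finset.sum_congr rfl fun i _ => h8 i, ← TensorProduct.sum_tmul, hdual a]
  have hμg : ∀ t, μ (g t) = t := by
    intro t
    induction t using TensorProduct.induction_on with
    | zero => simp
    | tmul a c => exact hμgt a c
    | add x y hx hy => rw [map_add, map_add, hx, hy]
  exact ⟨fun u v h => by rw [← hμg u, ← hμg v, h], fun r => ⟨μ r, hgμ r⟩⟩
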